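/- Let g, n, b be natural numbers with 2g + n + b ≥ 3 (equivalently, χ := 2 − 2g − n − b is a negative integer, and then 4g + n + b − 2 = 2 − (2χ + b + n) ≥ 1). Then there exists a unique real number r > 0 satisfying 3·(4g + n + b − 2)·α(r) + 2·n·β(r) + 2·b·γ(r) = 2π. -/

import Mathlib

open Real Filter Set

private lemma aux_cosh_atTop : Filter.Tendsto Real.cosh Filter.atTop Filter.atTop := by
  apply tendsto_atTop_mono (f := fun x => Real.exp x / 2)
  · intro x
    rw [Real.cosh_eq]
    have := (Real.exp_pos (-x)).le
    gcongr
    linarith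
  · exact Real.tendsto_exp_atTop.atTop_div_const two_pos

/-- The equation defining the sharp injectivity radius bound `r_{χ,n,b}`:
for natural numbers `g, n, b` with `2g + n + b ≥ 3` there is a unique `r > 0` with
`3·(4g+n+b−2)·α(r) + 2n·β(r) + 2b·γ(r) = 2π`, where
`α(r) = 2·arcsin(1/(2cosh r))`, `β(r) = arcsin(1/cosh r)`,
`γ(r) = 2·arcsin(1/(√2·cosh r))`. -/
theorem stmt_0 (g n b : ℕ) (h : 3 ≤ 2 * g + n + b) :
    ∃! r : ℝ, 0 < r ∧
      3 * ((4 * g + n + b : ℝ) - 2) * (2 * Real.arcsin (1 / (2 * Real.cosh r)))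
        + 2 * (n : ℝ) * Real.arcsin (1 / Real.cosh r)
        + 2 * (b : ℝ) * (2 * Real.arcsin (1 / (Real.sqrt 2 * Real.cosh r)))
      = 2 * Real.pi := by
  set f : ℝ → ℝ := fun r =>
      3 * ((4 * g + n + b : ℝ) - 2) * (2 * Real.arcsin (1 / (2 * Real.cosh r)))
        + 2 * (n : ℝ) * Real.arcsin (1 / Real.cosh r)
        + 2 * (b : ℝ) * (2 * Real.arcsin (1 / (Real.sqrt 2 * Real.cosh r))) with hf
  have hC1 : (1:ℝ) ≤ (4 * g + n + b : ℝ) - 2 := by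
    have h3 : (3:ℝ) ≤ 2 * g + n + b := by exact_mod_cast h
    have hg : (0:ℝ) ≤ (g:ℝ) := Nat.cast_nonneg g
    push_cast at h3 ⊢
    nlinarith
  have hs2 : (1:ℝ) ≤ Real.sqrt 2 := by
    rw [show (1:ℝ) = Real.sqrt 1 by simp]
    exact Real.sqrt_le_sqrt (by norm_num)
  have hn : (0:ℝ) ≤ (n:ℝ) := Nat.cast_nonneg n
  have hb : (0:ℝ) ≤ (b:ℝ) := Nat.cast_nonneg b
  -- strict antitonicity of f on [0, ∞)
  have hanti : StrictAntiOn f (Set.Ici (0:ℝ)) := by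
    intro x hx y hy hxy
    have hcosh : Real.cosh x < Real.cosh y := by
      rw [Real.cosh_lt_cosh, abs_of_nonneg hx, abs_of_nonneg (le_trans hx hxy.le)]
      exact hxy
    have h1x := Real.one_le_cosh x
    have h1y := Real.one_le_cosh y
    have key : ∀ c : ℝ, 1 ≤ c →
        Real.arcsin (1 / (c * Real.cosh y)) < Real.arcsin (1 / (c * Real.cosh x)) := by
      intro c hc
      apply Real.strictMonoOn_arcsin
      · constructor
        · have : (0:ℝ) ≤ 1 / (c * Real.cosh y) := by positivity
          linarith
        · rw [div_le_one (by positivity)]; nlinarith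
      · constructor
        · have : (0:ℝ) ≤ 1 / (c * Real.cosh x) := by positivity
          linarith
        · rw [div_le_one (by positivity)]; nlinarith
      · apply div_lt_div_of_pos_left one_pos (by positivity)
        nlinarith
    have k1 := key 2 (by norm_num)
    have k3 := key (Real.sqrt 2) hs2
    have k2 : Real.arcsin (1 / Real.cosh y) ≤ Real.arcsin (1 / Real.cosh x) := by
      apply Real.monotone_arcsin
      exact div_le_div_of_nonneg_left one_pos.le (by positivity) hcosh.le
    simp only [hf]
    nlinarith
  -- continuity
  have hcontc : ∀ c : ℝ, 1 ≤ c →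
      Continuous (fun r => Real.arcsin (1 / (c * Real.cosh r))) := by
    intro c hc
    exact Real.continuous_arcsin.comp (continuous_const.div
      (continuous_const.mul Real.continuous_cosh)
      (fun r => by have := Real.one_le_cosh r; positivity))
  have hc2 : Continuous (fun r => Real.arcsin (1 / Real.cosh r)) := by
    have := hcontc 1 le_rfl
    simpa using this
  have hcont : Continuous f := by
    exact ((continuous_const.mul (continuous_const.mul (hcontc 2 (by norm_num)))).add
      (continuous_const.mul hc2)).add
      (continuous_const.mul (continuous_const.mul (hcontc (Real.sqrt 2) hs2)))
  -- tendsto 0 at infinity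
  have htend : ∀ c : ℝ, 1 ≤ c →
      Filter.Tendsto (fun r => Real.arcsin (1 / (c * Real.cosh r))) Filter.atTop (nhds 0) := by
    intro c hc
    have h1 : Filter.Tendsto (fun r => c * Real.cosh r) Filter.atTop Filter.atTop :=
      aux_cosh_atTop.const_mul_atTop (by linarith)
    have h2 : Filter.Tendsto (fun r => 1 / (c * Real.cosh r)) Filter.atTop (nhds 0) := by
      simp only [one_div]; exact h1.inv_tendsto_atTop
    have h3 := (Real.continuous_arcsin.continuousAt (x := (0:ℝ))).tendsto.comp h2
    simpa [Function.comp_def] using h3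
  have htf : Filter.Tendsto f Filter.atTop (nhds 0) := by
    have h1 := htend 2 (by norm_num)
    have h2 : Filter.Tendsto (fun r => Real.arcsin (1 / Real.cosh r))
        Filter.atTop (nhds 0) := by simpa using htend 1 le_rfl
    have h3 := htend (Real.sqrt 2) hs2
    rw [hf, show (0:ℝ) = 3 * ((4 * g + n + b : ℝ) - 2) * (2 * 0) + 2 * (n:ℝ) * 0
        + 2 * (b:ℝ) * (2 * 0) by ring]
    exact ((tendsto_const_nhds.mul (tendsto_const_nhds.mul h1)).add
      (tendsto_const_nhds.mul h2)).add
      (tendsto_const_nhds.mul (tendsto_const_nhds.mul h3))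
  have hpi := Real.pi_pos
  have hev : ∀ᶠ r in Filter.atTop, f r < 2 * Real.pi :=
    htf.eventually_lt_const (by linarith)
  obtain ⟨R, hR1, hRf⟩ := ((Filter.eventually_ge_atTop (1:ℝ)).and hev).exists
  -- value at 0
  have hf0 : f 0 = ((4 * g + n + b : ℝ) - 2 + n + b) * Real.pi := by
    have ha : Real.arcsin (1/2 : ℝ) = Real.pi / 6 := by
      rw [← Real.sin_pi_div_six]
      exact Real.arcsin_sin (by linarith) (by linarith)
    have hc : Real.arcsin (1 / Real.sqrt 2) = Real.pi / 4 := by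
      have hs : Real.sqrt 2 * Real.sqrt 2 = 2 := Real.mul_self_sqrt (by norm_num)
      have hs0 : Real.sqrt 2 ≠ 0 := by positivity
      have : (1 : ℝ) / Real.sqrt 2 = Real.sin (Real.pi / 4) := by
        rw [Real.sin_pi_div_four, div_eq_div_iff (by positivity) (by norm_num : (2:ℝ) ≠ 0)]
        linarith
      rw [this, Real.arcsin_sin (by linarith) (by linarith)]
    simp only [hf, Real.cosh_zero, mul_one, one_div_one, Real.arcsin_one, ha, hc]
    ring
  have hf0' : 4 * Real.pi ≤ f 0 := by
    rw [hf0]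
    have h3 : (3:ℝ) ≤ 2 * g + n + b := by exact_mod_cast h
    have hg : (0:ℝ) ≤ (g:ℝ) := Nat.cast_nonneg g
    push_cast at h3 ⊢
    nlinarith
  -- IVT
  have hsub := intermediate_value_Icc' (by linarith : (0:ℝ) ≤ R) hcont.continuousOn
  have hmem : 2 * Real.pi ∈ Set.Icc (f R) (f 0) := ⟨hRf.le, by linarith⟩
  obtain ⟨r, hrIcc, hr⟩ := hsub hmem
  have hrpos : 0 < r := by
    rcases hrIcc.1.lt_or_eq with h' | h'
    · exact h'
    · exfalso; rw [← h'] at hr; rw [hr] at hf0'; linarith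
  refine ⟨r, ⟨hrpos, hr⟩, ?_⟩
  rintro r' ⟨hr'pos, hr'⟩
  have hfr' : f r' = f r := by rw [hr]; exact hr'
  exact hanti.injOn (Set.mem_Ici.2 hr'pos.le) (Set.mem_Ici.2 hrpos.le) hfr'
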